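/- Let f(x) = -log(e^{x/2} + e^{-x/2}) viewed as a function of s = x². Then f is convex in s, and consequently for all x, ξ ∈ ℝ: -log(e^{x/2} + e^{-x/2}) ≥ -log(e^{ξ/2} + e^{-ξ/2}) - (tanh(ξ/2)/(4ξ))·(x² - ξ²). -/

import Mathlib

open Real

lemma hasDerivAt_tanh' (x : ℝ) : HasDerivAt Real.tanh (1 / Real.cosh x ^ 2) x := by
  have h := (Real.hasDerivAt_sinh x).div (Real.hasDerivAt_cosh x) (Real.cosh_pos x).ne'
  have heq : (Real.sinh / Real.cosh) = Real.tanh := by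
    funext y; rw [Pi.div_apply, Real.tanh_eq_sinh_div_cosh]
  rw [heq] at h
  refine h.congr_deriv ?_
  have := Real.cosh_sq_sub_sinh_sq x
  have := (Real.cosh_pos x).ne'
  field_simp
  nlinarith [Real.cosh_pos x]

lemma tanh_ratio {a b : ℝ} (ha : 0 ≤ a) (hab : a ≤ b) :
    a * Real.tanh b ≤ b * Real.tanh a := by
  have key : MonotoneOn (fun t => t * Real.tanh a - a * Real.tanh t) (Set.Ici a) := by
    apply monotoneOn_of_deriv_nonneg (convex_Ici a)
    · apply Continuous.continuousOn
      have htc : Continuous Real.tanh :=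
        (Differentiable.continuous (fun x => (hasDerivAt_tanh' x).differentiableAt))
      fun_prop
    · intro t _
      exact (((hasDerivAt_id t).mul_const _).sub
        ((hasDerivAt_tanh' t).const_mul a)).differentiableAt.differentiableWithinAt
    · intro t ht
      rw [interior_Ici] at ht
      have hd : deriv (fun t => t * Real.tanh a - a * Real.tanh t) t
          = Real.tanh a - a * (1 / Real.cosh t ^ 2) := by
        have h := (((hasDerivAt_id t).mul_const (Real.tanh a)).sub
          ((hasDerivAt_tanh' t).const_mul a))
        exact h.deriv.trans (by ring)
      rw [hd, sub_nonneg]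
      have hca : (1:ℝ) ≤ Real.cosh a := Real.one_le_cosh a
      have hct : Real.cosh a ≤ Real.cosh t :=
        Real.cosh_le_cosh.2 (by
          rw [abs_of_nonneg ha, abs_of_nonneg (ha.trans ht.le)]; exact ht.le)
      have hsa : a ≤ Real.sinh a := Real.self_le_sinh_iff.2 ha
      have hsn : 0 ≤ Real.sinh a := Real.sinh_nonneg_iff.2 ha
      have htanh : a / Real.cosh a ^ 2 ≤ Real.tanh a := by
        rw [Real.tanh_eq_sinh_div_cosh, div_le_div_iff₀ (by positivity) (Real.cosh_pos a)]
        have h5 : a * Real.cosh a ≤ Real.sinh a * Real.cosh a :=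
          mul_le_mul_of_nonneg_right hsa (Real.cosh_pos a).le
        nlinarith [mul_nonneg hsn (mul_nonneg (Real.cosh_pos a).le (sub_nonneg.2 hca))]
      calc a * (1 / Real.cosh t ^ 2) = a / Real.cosh t ^ 2 := by ring
        _ ≤ a / Real.cosh a ^ 2 := by
            apply div_le_div_of_nonneg_left ha (by positivity)
            nlinarith
        _ ≤ Real.tanh a := htanh
  have h := key (Set.self_mem_Ici) (Set.mem_Ici.2 hab) hab
  simp only at h
  linarith

-- G and its derivative
noncomputable def Gf (x : ℝ) : ℝ := Real.log (Real.exp (x/2) + Real.exp (-x/2))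

lemma Gf_pos_arg (x : ℝ) : 0 < Real.exp (x/2) + Real.exp (-x/2) := by positivity

lemma Gf_eq_cosh (x : ℝ) : Gf x = Real.log (2 * Real.cosh (x/2)) := by
  unfold Gf
  rw [Real.cosh_eq]
  norm_num
  ring_nf

lemma hasDerivAt_Gf (x : ℝ) : HasDerivAt Gf (Real.tanh (x/2) / 2) x := by
  have h1 : HasDerivAt (fun y : ℝ => y / 2) (1/2) x := (hasDerivAt_id x).div_const 2
  have h2 : HasDerivAt (fun y : ℝ => 2 * Real.cosh (y/2)) (Real.sinh (x/2) * (1/2) * 2) x := by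
    have := ((Real.hasDerivAt_cosh (x/2)).comp x h1).const_mul 2
    exact this.congr_deriv (by ring)
  have h3 : HasDerivAt (fun y : ℝ => Real.log (2 * Real.cosh (y/2)))
      ((Real.sinh (x/2) * (1/2) * 2) / (2 * Real.cosh (x/2))) x :=
    h2.log (by positivity)
  have heq : Gf = fun y : ℝ => Real.log (2 * Real.cosh (y/2)) := funext Gf_eq_cosh
  rw [heq]
  convert h3 using 1
  rw [Real.tanh_eq_sinh_div_cosh, div_div, mul_comm (2:ℝ) (Real.cosh (x/2))]
  congr 1
  ring

lemma Gf_even (x : ℝ) : Gf (-x) = Gf x := by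
  unfold Gf
  rw [neg_neg, add_comm]

lemma hasDerivAt_D (c x : ℝ) :
    HasDerivAt (fun y => Gf y - c * y ^ 2) (Real.tanh (x/2) / 2 - 2 * c * x) x := by
  have h := (hasDerivAt_Gf x).sub ((hasDerivAt_pow 2 x).const_mul c)
  exact h.congr_deriv (by ring)

lemma tangent0 {ξ : ℝ} (hξ : 0 < ξ) {x : ℝ} (hx : 0 ≤ x) :
    Gf x ≤ Gf ξ + Real.tanh (ξ/2) / (4*ξ) * (x^2 - ξ^2) := by
  set c := Real.tanh (ξ/2) / (4*ξ) with hc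
  have hkey : Gf x - c * x ^ 2 ≤ Gf ξ - c * ξ ^ 2 := by
    rcases le_total x ξ with hxξ | hxξ
    · have hmono : MonotoneOn (fun y => Gf y - c * y ^ 2) (Set.Icc 0 ξ) := by
        apply monotoneOn_of_deriv_nonneg (convex_Icc 0 ξ)
        · exact Continuous.continuousOn (by
            exact (Differentiable.continuous (fun y => (hasDerivAt_D c y).differentiableAt)))
        · intro t _
          exact (hasDerivAt_D c t).differentiableAt.differentiableWithinAt
        · intro t ht
          rw [interior_Icc] at ht
          rw [(hasDerivAt_D c t).deriv, sub_nonneg]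
          have hr := tanh_ratio (a := t/2) (b := ξ/2) (by linarith [ht.1]) (by linarith [ht.2])
          rw [hc]
          have hne : ξ ≠ 0 := hξ.ne'
          have heq2 : 2 * (Real.tanh (ξ/2) / (4*ξ)) * t = (t * Real.tanh (ξ/2)) / (2*ξ) := by
            field_simp; ring
          rw [heq2, div_le_div_iff₀ (by linarith) (by norm_num)]
          nlinarith
      exact hmono ⟨hx, hxξ⟩ ⟨le_of_lt hξ, le_refl ξ⟩ hxξ
    · have hanti : AntitoneOn (fun y => Gf y - c * y ^ 2) (Set.Ici ξ) := by
        apply antitoneOn_of_deriv_nonpos (convex_Ici ξ)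
        · exact Continuous.continuousOn (by
            exact (Differentiable.continuous (fun y => (hasDerivAt_D c y).differentiableAt)))
        · intro t _
          exact (hasDerivAt_D c t).differentiableAt.differentiableWithinAt
        · intro t ht
          rw [interior_Ici] at ht
          rw [(hasDerivAt_D c t).deriv, sub_nonpos]
          have hr := tanh_ratio (a := ξ/2) (b := t/2) (by linarith) (by linarith [ht.out])
          rw [hc]
          have hne : ξ ≠ 0 := hξ.ne'
          have heq2 : 2 * (Real.tanh (ξ/2) / (4*ξ)) * t = (t * Real.tanh (ξ/2)) / (2*ξ) := by
            field_simp; ring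
          rw [heq2, div_le_div_iff₀ (by norm_num) (by linarith)]
          nlinarith
      exact hanti Set.self_mem_Ici (Set.mem_Ici.2 hxξ) hxξ
  linarith

lemma tangent {ξ : ℝ} (hξ : 0 < ξ) (x : ℝ) :
    Gf x ≤ Gf ξ + Real.tanh (ξ/2) / (4*ξ) * (x^2 - ξ^2) := by
  rcases le_or_gt 0 x with hx | hx
  · exact tangent0 hξ hx
  · have h := tangent0 hξ (x := -x) (by linarith)
    rw [Gf_even] at h
    calc Gf x ≤ Gf ξ + Real.tanh (ξ/2) / (4*ξ) * ((-x)^2 - ξ^2) := h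
      _ = Gf ξ + Real.tanh (ξ/2) / (4*ξ) * (x^2 - ξ^2) := by ring_nf

lemma hasDerivAt_fconv {s : ℝ} (hs : s ≠ 0) :
    HasDerivAt (fun s : ℝ => -Real.log (Real.exp (Real.sqrt s / 2) + Real.exp (-(Real.sqrt s) / 2)))
      (-(Real.tanh (Real.sqrt s / 2) / (4 * Real.sqrt s))) s := by
  have h := ((hasDerivAt_Gf (Real.sqrt s)).neg).comp s (Real.hasDerivAt_sqrt hs)
  have heq : ((-Gf) ∘ Real.sqrt)
      = (fun s : ℝ => -Real.log (Real.exp (Real.sqrt s / 2) + Real.exp (-(Real.sqrt s) / 2))) := by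
    funext y; simp [Function.comp, Gf]
  rw [heq] at h
  refine h.congr_deriv ?_
  have hsq : Real.sqrt s ≠ 0 ∨ True := Or.inr trivial
  field_simp
  ring

theorem stmt18 :
    ConvexOn ℝ (Set.Ici 0)
      (fun s : ℝ => -Real.log (Real.exp (Real.sqrt s / 2) + Real.exp (-(Real.sqrt s) / 2))) ∧
    ∀ x ξ : ℝ, ξ ≠ 0 →
      -Real.log (Real.exp (x/2) + Real.exp (-x/2)) ≥
        -Real.log (Real.exp (ξ/2) + Real.exp (-ξ/2)) -
          (Real.tanh (ξ/2)/(4*ξ)) * (x^2 - ξ^2) := by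
  constructor
  · apply MonotoneOn.convexOn_of_deriv (convex_Ici 0)
    · have hc : Continuous fun s : ℝ => Real.exp (Real.sqrt s / 2) + Real.exp (-(Real.sqrt s) / 2) := by
        fun_prop
      exact (hc.continuousOn.log fun x _ => by positivity).neg
    · rw [interior_Ici]
      intro s hs
      exact (hasDerivAt_fconv (ne_of_gt hs.out)).differentiableAt.differentiableWithinAt
    · rw [interior_Ici]
      intro s hs t ht hst
      rw [(hasDerivAt_fconv (ne_of_gt hs.out)).deriv, (hasDerivAt_fconv (ne_of_gt ht.out)).deriv]
      apply neg_le_neg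
      have h1 : 0 < Real.sqrt s := Real.sqrt_pos.2 hs.out
      have h2 : 0 < Real.sqrt t := Real.sqrt_pos.2 ht.out
      have hsr : Real.sqrt s ≤ Real.sqrt t := Real.sqrt_le_sqrt hst
      have hr := tanh_ratio (a := Real.sqrt s / 2) (b := Real.sqrt t / 2)
        (by positivity) (by linarith)
      rw [div_le_div_iff₀ (by linarith) (by linarith)]
      nlinarith
  · intro x ξ hξ
    have hgoal : Gf x ≤ Gf ξ + Real.tanh (ξ/2)/(4*ξ) * (x^2 - ξ^2) := by
      rcases lt_or_gt_of_ne hξ with h | h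
      · have hb := tangent (ξ := -ξ) (by linarith) x
        have ht : Real.tanh ((-ξ)/2) / (4*(-ξ)) = Real.tanh (ξ/2)/(4*ξ) := by
          rw [neg_div, Real.tanh_neg]
          ring
        rw [Gf_even, ht, neg_pow] at hb
        simpa using hb
      · exact tangent h x
    simp only [Gf] at hgoal
    linarith
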